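/- arXiv:1611.08861 — 2 statements merged into one kernel-verified Lean document; each statement's English description precedes it below -/
import Mathlib

section
/- There exist universal constants ρ > 0 and κ > 0 with the following property. For every n ∈ ℕ, every k ∈ {3,…,n}, every connected k-regular graph G = ([n], E_G), every D ≥ 1, and every finite-dimensional real normed space (X,‖·‖) into which the metric space ([n], d_G) embeds with average distortion D, one has dim(X) ≥ κ·n^{ρ(1−λ₂(G))/(D·log k)}. -/
open Finset

lemma auerbach_coords (X : Type*) [NormedAddCommGroup X] [NormedSpace ℝ X]
    [FiniteDimensional ℝ X] :
    ∃ c : X →ₗ[ℝ] (Fin (Module.finrank ℝ X) → ℝ),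
      (∀ x : X, ‖x‖ ^ 2 ≤ (Module.finrank ℝ X : ℝ) * ∑ i, (c x i) ^ 2) ∧
      (∀ x : X, ∑ i, (c x i) ^ 2 ≤ (Module.finrank ℝ X : ℝ) * ‖x‖ ^ 2) := by
  classical
  set d := Module.finrank ℝ X with hd
  let b : Module.Basis (Fin d) ℝ X := Module.finBasis ℝ X
  let F : (Fin d → X) → ℝ := fun v => |b.det v|
  have hFcont : Continuous F := by
    have h1 : Continuous fun v : Fin d → X => b.det v := by
      have : (fun v : Fin d → X => b.det v)
          = fun v => Matrix.det (Matrix.of fun i j => b.equivFunL (v j) i) := by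
        funext v
        rw [Module.Basis.det_apply]
        congr 1
      rw [this]
      apply Continuous.matrix_det
      apply continuous_matrix
      intro i j
      exact (continuous_apply i).comp (b.equivFunL.continuous.comp (continuous_apply j))
    exact h1.abs
  let K : Set (Fin d → X) := Set.univ.pi fun _ => Metric.sphere (0 : X) 1
  have hK : IsCompact K := isCompact_univ_pi fun _ => isCompact_sphere 0 1
  have hv0K : (fun i => ‖b i‖⁻¹ • b i) ∈ K := by
    intro i _
    have hbi : b i ≠ 0 := b.ne_zero i
    have : ‖b i‖ ≠ 0 := norm_ne_zero_iff.mpr hbi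
    simp [norm_smul, abs_of_nonneg (inv_nonneg.mpr (norm_nonneg (b i))), inv_mul_cancel₀ this]
  have hKne : K.Nonempty := ⟨_, hv0K⟩
  obtain ⟨u, huK, hmax⟩ := hK.exists_isMaxOn hKne hFcont.continuousOn
  have humem : ∀ i, ‖u i‖ = 1 := by
    intro i
    have := huK i (Set.mem_univ i)
    simpa [Metric.mem_sphere] using this
  -- positivity of the max
  have hFu : 0 < F u := by
    have hle := hmax hv0K
    have hv0val : F (fun i => ‖b i‖⁻¹ • b i) = ∏ i, ‖b i‖⁻¹ := by
      show |b.det _| = _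
      have : b.det (fun i => ‖b i‖⁻¹ • b i) = (∏ i, ‖b i‖⁻¹) • b.det b := by
        exact b.det.map_smul_univ (fun i => ‖b i‖⁻¹) b
      rw [this, Module.Basis.det_self, smul_eq_mul, mul_one]
      rw [abs_of_nonneg (Finset.prod_nonneg fun i _ => inv_nonneg.mpr (norm_nonneg _))]
    have hpos : 0 < F (fun i => ‖b i‖⁻¹ • b i) := by
      rw [hv0val]
      exact Finset.prod_pos fun i _ => inv_pos.mpr (norm_pos_iff.mpr (b.ne_zero i))
    exact lt_of_lt_of_le hpos hle
  -- u is a basis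
  have hdet_ne : b.det u ≠ 0 := fun h => by simp [F, h] at hFu
  obtain ⟨hli, hspan⟩ := (Module.Basis.is_basis_iff_det b).mpr (isUnit_iff_ne_zero.mpr hdet_ne)
  let u' : Module.Basis (Fin d) ℝ X := Module.Basis.mk hli hspan.ge
  have hu'eq : ∀ i, u' i = u i := fun i => Module.Basis.mk_apply hli hspan.ge i
  -- coordinate bound
  have hcoord : ∀ (x : X) (i : Fin d), |u'.repr x i| ≤ ‖x‖ := by
    intro x i
    rcases eq_or_ne x 0 with rfl | hx
    · simp
    have hxn : (0:ℝ) < ‖x‖ := norm_pos_iff.mpr hx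
    set y : X := ‖x‖⁻¹ • x with hy
    have hyK : Function.update u i y ∈ K := by
      intro j _
      rcases eq_or_ne j i with rfl | hji
      · simp only [Function.update_self]
        simp only [Metric.mem_sphere, dist_zero_right]
        simp [hy, norm_smul, abs_of_nonneg (inv_nonneg.mpr (norm_nonneg x)),
          inv_mul_cancel₀ hxn.ne']
      · rw [Function.update_of_ne hji]
        simpa [Metric.mem_sphere] using humem j
    have hdet_update : b.det (Function.update u i y) = u'.repr y i * b.det u := by
      have hexp : y = ∑ j, u'.repr y j • u' j := (u'.sum_repr y).symm
      calc b.det (Function.update u i y)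
          = b.det (Function.update u i (∑ j, u'.repr y j • u' j)) := by rw [← hexp]
        _ = ∑ j, b.det (Function.update u i (u'.repr y j • u' j)) :=
            b.det.map_update_sum Finset.univ i _ u
        _ = ∑ j, u'.repr y j * b.det (Function.update u i (u' j)) := by
            refine Finset.sum_congr rfl fun j _ => ?_
            rw [b.det.map_update_smul]
            rfl
        _ = u'.repr y i * b.det u := by
            rw [Finset.sum_eq_single i]
            · rw [hu'eq, Function.update_eq_self]
            · intro j _ hji
              have : b.det (Function.update u i (u' j)) = 0 := by
                rw [hu'eq]
                exact b.det.map_update_self (v := u) (Ne.symm hji)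
              rw [this, mul_zero]
            · intro h; exact absurd (Finset.mem_univ i) h
    have hFle : F (Function.update u i y) ≤ F u := hmax hyK
    have : |u'.repr y i| * F u ≤ F u := by
      calc |u'.repr y i| * F u = |u'.repr y i * b.det u| := by
            rw [abs_mul]
          _ = F (Function.update u i y) := by rw [← hdet_update]
          _ ≤ F u := hFle
    have hyb : |u'.repr y i| ≤ 1 := by
      by_contra h
      push_neg at h
      nlinarith
    have : |u'.repr x i| = ‖x‖ * |u'.repr y i| := by
      rw [hy, map_smul]
      simp [abs_mul, abs_of_nonneg (inv_nonneg.mpr (norm_nonneg x))]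
      field_simp
    rw [this]
    calc ‖x‖ * |u'.repr y i| ≤ ‖x‖ * 1 := by
          exact mul_le_mul_of_nonneg_left hyb (norm_nonneg x)
      _ = ‖x‖ := mul_one _
  -- define the linear map
  refine ⟨(Finsupp.lcoeFun.comp (u'.repr : X →ₗ[ℝ] (Fin d →₀ ℝ))), ?_, ?_⟩
  · intro x
    have hxle : ‖x‖ ≤ ∑ i, |u'.repr x i| := by
      conv_lhs => rw [← u'.sum_repr x]
      refine le_trans (norm_sum_le _ _) ?_
      refine Finset.sum_le_sum fun i _ => ?_
      rw [norm_smul, hu'eq, humem i, mul_one]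
      rfl
    have hCS : (∑ i, |u'.repr x i|) ^ 2 ≤ (d : ℝ) * ∑ i, (u'.repr x i) ^ 2 := by
      have := Finset.sum_mul_sq_le_sq_mul_sq Finset.univ (fun _ : Fin d => (1:ℝ))
        (fun i => |u'.repr x i|)
      simp only [one_mul, one_pow, sq_abs] at this
      simpa [Finset.card_univ] using this
    calc ‖x‖ ^ 2 ≤ (∑ i, |u'.repr x i|) ^ 2 := by
          apply pow_le_pow_left₀ (norm_nonneg x) hxle
      _ ≤ (d : ℝ) * ∑ i, (u'.repr x i) ^ 2 := hCS
  · intro x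
    have : ∀ i : Fin d, (u'.repr x i) ^ 2 ≤ ‖x‖ ^ 2 := by
      intro i
      have := hcoord x i
      calc (u'.repr x i) ^ 2 = |u'.repr x i| ^ 2 := (sq_abs _).symm
        _ ≤ ‖x‖ ^ 2 := pow_le_pow_left₀ (abs_nonneg _) this 2
    calc ∑ i, ((u'.repr x i : ℝ)) ^ 2 ≤ ∑ _i : Fin d, ‖x‖ ^ 2 :=
          Finset.sum_le_sum fun i _ => this i
      _ = (d : ℝ) * ‖x‖ ^ 2 := by simp [Finset.card_univ, mul_comm]

open Finset

open scoped Classical in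
lemma ball_card_le {n k : ℕ} (G : SimpleGraph (Fin n))
    (hconn : G.Connected) (hreg : G.IsRegularOfDegree k) (i : Fin n) (r : ℕ) :
    (Finset.univ.filter (fun j => G.dist i j ≤ r)).card ≤ (k+1)^r := by
  induction r with
  | zero =>
    have : (Finset.univ.filter (fun j => G.dist i j ≤ 0)) ⊆ {i} := by
      intro j hj
      simp only [Finset.mem_filter, Nat.le_zero] at hj
      have := (hconn.dist_eq_zero_iff (u := i) (v := j)).mp hj.2
      simp [← this]
    calc _ ≤ ({i} : Finset (Fin n)).card := Finset.card_le_card this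
      _ = 1 := Finset.card_singleton i
      _ ≤ (k+1)^0 := by simp
  | succ r ih =>
    have hsub : (Finset.univ.filter (fun j => G.dist i j ≤ r+1)) ⊆
        (Finset.univ.filter (fun j => G.dist i j ≤ r)).biUnion
          (fun l => insert l (G.neighborFinset l)) := by
      intro j hj
      simp only [Finset.mem_filter, Finset.mem_univ, true_and] at hj
      rcases le_or_gt (G.dist i j) r with h | h
      · refine Finset.mem_biUnion.mpr ⟨j, ?_, Finset.mem_insert_self _ _⟩
        simp [h]
      · have hd : G.dist i j = r + 1 := le_antisymm hj (by omega)
        have hne : G.dist i j ≠ 0 := by omega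
        obtain ⟨p, hp⟩ := SimpleGraph.exists_walk_of_dist_ne_zero hne
        have hlen : p.reverse.length = r + 1 := by
          rw [SimpleGraph.Walk.length_reverse, hp, hd]
        cases hpr : p.reverse with
        | nil => rw [hpr] at hlen; simp at hlen
        | @cons _ l _ h q =>
          rw [hpr] at hlen
          simp only [SimpleGraph.Walk.length_cons] at hlen
          have hql : q.reverse.length = r := by
            rw [SimpleGraph.Walk.length_reverse]; omega
          have hdil : G.dist i l ≤ r := by
            calc G.dist i l ≤ q.reverse.length := SimpleGraph.dist_le _
              _ = r := hql
          refine Finset.mem_biUnion.mpr ⟨l, ?_, ?_⟩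
          · simp [hdil]
          · exact Finset.mem_insert.mpr (Or.inr ((SimpleGraph.mem_neighborFinset _ _ _).mpr h.symm))
    calc (Finset.univ.filter (fun j => G.dist i j ≤ r+1)).card
        ≤ _ := Finset.card_le_card hsub
      _ ≤ ∑ l ∈ (Finset.univ.filter (fun j => G.dist i j ≤ r)),
            (insert l (G.neighborFinset l)).card := Finset.card_biUnion_le
      _ ≤ ∑ _l ∈ (Finset.univ.filter (fun j => G.dist i j ≤ r)), (k+1) := by
          refine Finset.sum_le_sum fun l _ => ?_
          calc (insert l (G.neighborFinset l)).card ≤ (G.neighborFinset l).card + 1 :=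
                Finset.card_insert_le _ _
            _ = k + 1 := by rw [SimpleGraph.card_neighborFinset_eq_degree, hreg l]
      _ = (Finset.univ.filter (fun j => G.dist i j ≤ r)).card * (k+1) := by
          rw [Finset.sum_const, smul_eq_mul]
      _ ≤ (k+1)^r * (k+1) := Nat.mul_le_mul_right _ ih
      _ = (k+1)^(r+1) := by ring

open scoped Classical in
lemma dist_sum_lower {n k : ℕ} (hk3 : 3 ≤ k) (hn : 3 ≤ n) (G : SimpleGraph (Fin n))
    (hconn : G.Connected) (hreg : G.IsRegularOfDegree k) :
    ((n:ℝ)^2 / 2) * (Real.log ((n:ℝ)/2) / (2 * Real.log k)) ≤ ∑ i, ∑ j, (G.dist i j : ℝ) := by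
  have hlogk : 0 < Real.log k := Real.log_pos (by exact_mod_cast by omega)
  set v : ℝ := Real.log ((n:ℝ)/2) / (2 * Real.log k) with hv
  have hv0 : 0 ≤ v := by
    apply div_nonneg _ (by positivity)
    apply Real.log_nonneg
    have : (2:ℝ) ≤ (n:ℝ) := by exact_mod_cast by omega
    linarith
  set r : ℕ := ⌊v⌋₊ with hr
  have hrv : (r:ℝ) ≤ v := Nat.floor_le hv0
  have hvr1 : v < (r:ℝ) + 1 := Nat.lt_floor_add_one v
  have hcard : ∀ i : Fin n,
      ((Finset.univ.filter (fun j => G.dist i j ≤ r)).card : ℝ) ≤ (n:ℝ)/2 := by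
    intro i
    have h1 : ((Finset.univ.filter (fun j => G.dist i j ≤ r)).card : ℝ) ≤ ((k+1:ℕ):ℝ)^r := by
      exact_mod_cast Nat.cast_le.mpr (ball_card_le G hconn hreg i r)
    have hk1 : ((k+1:ℕ):ℝ) ≤ (k:ℝ)^2 := by
      have : (3:ℝ) ≤ (k:ℝ) := by exact_mod_cast hk3
      push_cast
      nlinarith
    have h2 : ((k+1:ℕ):ℝ)^r ≤ ((k:ℝ)^2)^r :=
      pow_le_pow_left₀ (by positivity) hk1 r
    have h3 : ((k:ℝ)^2)^r = Real.exp ((2*r : ℕ) * Real.log k) := by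
      rw [← pow_mul]
      rw [Real.exp_nat_mul, Real.exp_log (by positivity : (0:ℝ) < (k:ℝ))]
    have h4 : ((2*r : ℕ) : ℝ) * Real.log k ≤ Real.log ((n:ℝ)/2) := by
      push_cast
      have := (le_div_iff₀ (by positivity : (0:ℝ) < 2 * Real.log k)).mp hrv
      linarith
    have h5 : Real.exp ((2*r : ℕ) * Real.log k) ≤ Real.exp (Real.log ((n:ℝ)/2)) :=
      Real.exp_le_exp.mpr h4
    have h6 : Real.exp (Real.log ((n:ℝ)/2)) = (n:ℝ)/2 := by
      apply Real.exp_log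
      have : (3:ℝ) ≤ (n:ℝ) := by exact_mod_cast hn
      linarith
    calc ((Finset.univ.filter (fun j => G.dist i j ≤ r)).card : ℝ)
        ≤ ((k+1:ℕ):ℝ)^r := h1
      _ ≤ ((k:ℝ)^2)^r := h2
      _ = Real.exp ((2*r : ℕ) * Real.log k) := h3
      _ ≤ Real.exp (Real.log ((n:ℝ)/2)) := h5
      _ = (n:ℝ)/2 := h6
  have hrow : ∀ i : Fin n, ((n:ℝ)/2) * v ≤ ∑ j, (G.dist i j : ℝ) := by
    intro i
    set S := Finset.univ.filter (fun j => r < G.dist i j) with hS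
    have hScard : ((n:ℝ)/2) ≤ (S.card : ℝ) := by
      have := Finset.card_filter_add_card_filter_not
        (s := (Finset.univ : Finset (Fin n))) (p := fun j => G.dist i j ≤ r)
      have hcards : (S.card : ℝ) = (n:ℝ) -
          ((Finset.univ.filter (fun j => G.dist i j ≤ r)).card : ℝ) := by
        rw [eq_sub_iff_add_eq]
        rw [← Nat.cast_add]
        rw [add_comm]
        exact_mod_cast congrArg (Nat.cast (R := ℝ)) (by simpa using this)
      rw [hcards]
      have := hcard i
      linarith
    have hstep : ∀ j ∈ S, ((r:ℝ) + 1) ≤ (G.dist i j : ℝ) := by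
      intro j hj
      simp only [hS, Finset.mem_filter] at hj
      have hj2 : r < G.dist i j := hj.2
      have : r + 1 ≤ G.dist i j := hj2
      exact_mod_cast this
    calc ((n:ℝ)/2) * v ≤ (S.card : ℝ) * ((r:ℝ)+1) := by
          exact mul_le_mul hScard hvr1.le hv0 (by positivity)
      _ = ∑ _j ∈ S, ((r:ℝ)+1) := by rw [Finset.sum_const, nsmul_eq_mul]
      _ ≤ ∑ j ∈ S, (G.dist i j : ℝ) := Finset.sum_le_sum hstep
      _ ≤ ∑ j, (G.dist i j : ℝ) := by
          apply Finset.sum_le_sum_of_subset_of_nonneg (Finset.filter_subset _ _)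
          intro j _ _
          positivity
  calc ((n:ℝ)^2 / 2) * v = ∑ _i : Fin n, ((n:ℝ)/2) * v := by
        rw [Finset.sum_const, nsmul_eq_mul, Finset.card_univ, Fintype.card_fin]
        ring
    _ ≤ ∑ i, ∑ j, (G.dist i j : ℝ) := Finset.sum_le_sum fun i _ => hrow i

open Finset Matrix

section MatrixLemmas

variable {n : ℕ}

lemma mulVec_entry (M : Matrix (Fin n) (Fin n) ℝ) (v : Fin n → ℝ) (i : Fin n) :
    (M *ᵥ v) i = ∑ j, M i j * v j := rfl

/-- Quadratic form of a symmetric stochastic nonneg matrix is ≥ -‖t‖². -/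
lemma form_ge_neg (A : Matrix (Fin n) (Fin n) ℝ)
    (hsym : ∀ i j, A i j = A j i) (hnn : ∀ i j, 0 ≤ A i j)
    (hrow : ∀ i, ∑ j, A i j = 1) (t : Fin n → ℝ) :
    -(∑ i, t i ^ 2) ≤ ∑ i, ∑ j, A i j * t i * t j := by
  have hcol : ∀ j, ∑ i, A i j = 1 := by
    intro j
    calc ∑ i, A i j = ∑ i, A j i := by
          exact Finset.sum_congr rfl fun i _ => hsym i j
      _ = 1 := hrow j
  have h0 : (0:ℝ) ≤ ∑ i, ∑ j, A i j * (t i + t j)^2 := by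
    apply Finset.sum_nonneg; intro i _
    apply Finset.sum_nonneg; intro j _
    exact mul_nonneg (hnn i j) (sq_nonneg _)
  have hexp : ∑ i, ∑ j, A i j * (t i + t j)^2
      = (∑ i, t i ^ 2) + 2 * (∑ i, ∑ j, A i j * t i * t j) + (∑ i, t i ^ 2) := by
    have e1 : ∀ i j, A i j * (t i + t j)^2
        = A i j * t i ^ 2 + 2 * (A i j * t i * t j) + A i j * t j ^ 2 := by
      intro i j; ring
    have : ∑ i, ∑ j, A i j * (t i + t j)^2
        = ∑ i, ∑ j, (A i j * t i ^ 2 + 2 * (A i j * t i * t j) + A i j * t j ^ 2) := by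
      exact Finset.sum_congr rfl fun i _ => Finset.sum_congr rfl fun j _ => e1 i j
    rw [this]
    simp only [Finset.sum_add_distrib]
    have hA1 : ∑ i, ∑ j, A i j * t i ^ 2 = ∑ i, t i ^ 2 := by
      refine Finset.sum_congr rfl fun i _ => ?_
      rw [← Finset.sum_mul, hrow i, one_mul]
    have hA2 : ∑ i, ∑ j, A i j * t j ^ 2 = ∑ i, t i ^ 2 := by
      rw [Finset.sum_comm]
      refine Finset.sum_congr rfl fun j _ => ?_
      rw [← Finset.sum_mul, hcol j, one_mul]
    have hA3 : ∑ i, ∑ j, 2 * (A i j * t i * t j) = 2 * ∑ i, ∑ j, A i j * t i * t j := by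
      rw [Finset.mul_sum]
      exact Finset.sum_congr rfl fun i _ => by rw [Finset.mul_sum]
    rw [hA1, hA2, hA3]
  nlinarith [h0, hexp]

end MatrixLemmas

namespace ExpanderAux

variable {n : ℕ}

noncomputable def Bmat (A : Matrix (Fin n) (Fin n) ℝ) : Matrix (Fin n) (Fin n) ℝ :=
  Matrix.of fun i j => ((if i = j then (1:ℝ) else 0) + A i j)/2

lemma Bmat_apply (A : Matrix (Fin n) (Fin n) ℝ) (i j : Fin n) :
    Bmat A i j = ((if i = j then (1:ℝ) else 0) + A i j)/2 := rfl

section Bprops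

variable (A : Matrix (Fin n) (Fin n) ℝ)
  (hsym : ∀ i j, A i j = A j i) (hnn : ∀ i j, 0 ≤ A i j)
  (hrow : ∀ i, ∑ j, A i j = 1)

include hnn in
lemma Bmat_nn : ∀ i j, 0 ≤ Bmat A i j := by
  intro i j
  rw [Bmat_apply]
  have := hnn i j
  positivity

include hrow in
lemma Bmat_row : ∀ i, ∑ j, Bmat A i j = 1 := by
  intro i
  simp only [Bmat_apply]
  rw [← Finset.sum_div, Finset.sum_add_distrib, hrow i]
  simp

include hsym in
lemma Bmat_sym : ∀ i j, Bmat A i j = Bmat A j i := by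
  intro i j
  simp only [Bmat_apply, hsym i j]
  congr 2
  by_cases h : i = j <;> simp [h, eq_comm]

include hnn in
lemma Bpow_nn : ∀ (m : ℕ) (i j : Fin n), 0 ≤ (Bmat A ^ m) i j := by
  intro m
  induction m with
  | zero => intro i j; rw [pow_zero, Matrix.one_apply]; positivity
  | succ m ih =>
    intro i j
    rw [pow_succ, Matrix.mul_apply]
    exact Finset.sum_nonneg fun l _ => mul_nonneg (ih i l) (Bmat_nn A hnn l j)

include hrow in
lemma Bpow_row : ∀ (m : ℕ) (i : Fin n), ∑ j, (Bmat A ^ m) i j = 1 := by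
  intro m
  induction m with
  | zero => intro i; simp [pow_zero, Matrix.one_apply]
  | succ m ih =>
    intro i
    simp only [pow_succ, Matrix.mul_apply]
    rw [Finset.sum_comm]
    calc ∑ l, ∑ j, (Bmat A ^ m) i l * Bmat A l j
        = ∑ l, (Bmat A ^ m) i l * ∑ j, Bmat A l j := by
          exact Finset.sum_congr rfl fun l _ => (Finset.mul_sum _ _ _).symm
      _ = ∑ l, (Bmat A ^ m) i l := by
          exact Finset.sum_congr rfl fun l _ => by rw [Bmat_row A hrow l, mul_one]
      _ = 1 := ih i

include hsym in
lemma Bpow_sym : ∀ (m : ℕ) (i j : Fin n), (Bmat A ^ m) i j = (Bmat A ^ m) j i := by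
  intro m i j
  have hBsym : (Bmat A)ᵀ = Bmat A := by
    ext a b
    rw [Matrix.transpose_apply]
    exact Bmat_sym A hsym b a
  have : (Bmat A ^ m)ᵀ = Bmat A ^ m := by
    rw [Matrix.transpose_pow, hBsym]
  calc (Bmat A ^ m) i j = (Bmat A ^ m)ᵀ j i := rfl
    _ = (Bmat A ^ m) j i := by rw [this]

end Bprops


open scoped Classical in
lemma Bpow_supp (G : SimpleGraph (Fin n)) (hconn : G.Connected)
    (A : Matrix (Fin n) (Fin n) ℝ)
    (hAsupp : ∀ i j, A i j ≠ 0 → G.Adj i j) :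
    ∀ (m : ℕ) (i j : Fin n), (Bmat A ^ m) i j ≠ 0 → G.dist i j ≤ m := by
  intro m
  induction m with
  | zero =>
    intro i j h
    rw [pow_zero, Matrix.one_apply] at h
    by_cases hij : i = j
    · subst hij; simp [SimpleGraph.dist_self]
    · simp [hij] at h
  | succ m ih =>
    intro i j h
    rw [pow_succ, Matrix.mul_apply] at h
    obtain ⟨l, _, hl⟩ := Finset.exists_ne_zero_of_sum_ne_zero h
    have h1 : (Bmat A ^ m) i l ≠ 0 := fun hz => hl (by rw [hz, zero_mul])
    have h2 : Bmat A l j ≠ 0 := fun hz => hl (by rw [hz, mul_zero])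
    have hdil : G.dist i l ≤ m := ih i l h1
    have hdlj : G.dist l j ≤ 1 := by
      rw [Bmat_apply] at h2
      by_cases hlj : l = j
      · subst hlj; simp [SimpleGraph.dist_self]
      · have hA : A l j ≠ 0 := by
          intro hz
          apply h2
          simp [hlj, hz]
        have := hAsupp l j hA
        rw [SimpleGraph.dist_eq_one_iff_adj.mpr this]
    calc G.dist i j ≤ G.dist i l + G.dist l j := hconn.dist_triangle
      _ ≤ m + 1 := Nat.add_le_add hdil hdlj


section Spectral

variable (A : Matrix (Fin n) (Fin n) ℝ)
  (hsym : ∀ i j, A i j = A j i) (hnn : ∀ i j, 0 ≤ A i j)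
  (hrow : ∀ i, ∑ j, A i j = 1)

include hsym hrow in
lemma sum_mulVec_zero (t : Fin n → ℝ) (ht : ∑ i, t i = 0) :
    ∑ i, (Bmat A *ᵥ t) i = 0 := by
  have hcol : ∀ j, ∑ i, Bmat A i j = 1 := by
    intro j
    calc ∑ i, Bmat A i j = ∑ i, Bmat A j i :=
          Finset.sum_congr rfl fun i _ => Bmat_sym A hsym i j
      _ = 1 := Bmat_row A hrow j
  calc ∑ i, (Bmat A *ᵥ t) i = ∑ i, ∑ j, Bmat A i j * t j := rfl
    _ = ∑ j, (∑ i, Bmat A i j) * t j := by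
        rw [Finset.sum_comm]
        exact Finset.sum_congr rfl fun j _ => (Finset.sum_mul _ _ _).symm
    _ = ∑ j, t j := Finset.sum_congr rfl fun j _ => by rw [hcol j, one_mul]
    _ = 0 := ht

lemma formB_eq (t : Fin n → ℝ) :
    ∑ i, ∑ j, Bmat A i j * t i * t j
      = ((∑ i, t i ^ 2) + ∑ i, ∑ j, A i j * t i * t j) / 2 := by
  have hdelta : ∑ i, ∑ j, (if i = j then (1:ℝ) else 0) * t i * t j = ∑ i, t i ^ 2 := by
    refine Finset.sum_congr rfl fun i _ => ?_
    rw [Finset.sum_eq_single i]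
    · simp [sq]
    · intro j _ hji
      simp [Ne.symm hji]
    · intro h; exact absurd (Finset.mem_univ i) h
  calc ∑ i, ∑ j, Bmat A i j * t i * t j
      = ∑ i, ∑ j, (((if i = j then (1:ℝ) else 0) * t i * t j) + A i j * t i * t j) / 2 := by
        refine Finset.sum_congr rfl fun i _ => Finset.sum_congr rfl fun j _ => ?_
        rw [Bmat_apply]; ring
    _ = ((∑ i, ∑ j, (if i = j then (1:ℝ) else 0) * t i * t j)
          + ∑ i, ∑ j, A i j * t i * t j) / 2 := by
        simp only [← Finset.sum_div, Finset.sum_add_distrib]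
    _ = _ := by rw [hdelta]

include hsym hnn hrow in
lemma formB_nonneg (t : Fin n → ℝ) :
    0 ≤ ∑ i, ∑ j, Bmat A i j * t i * t j := by
  rw [formB_eq]
  have := form_ge_neg A hsym hnn hrow t
  linarith

include hsym hnn hrow in
lemma Bmat_mulVec_sq_le {lam : ℝ} (hlam1 : -1 ≤ lam)
    (hray : ∀ t : Fin n → ℝ, (∑ i, t i) = 0 →
      ∑ i, ∑ j, A i j * t i * t j ≤ lam * ∑ i, t i ^ 2)
    (t : Fin n → ℝ) (ht : ∑ i, t i = 0) :
    ∑ i, ((Bmat A *ᵥ t) i)^2 ≤ ((1+lam)/2)^2 * ∑ i, t i ^ 2 := by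
  set lp : ℝ := (1+lam)/2 with hlp
  have hlp0 : 0 ≤ lp := by rw [hlp]; linarith
  have formB_le : ∀ s : Fin n → ℝ, (∑ i, s i) = 0 →
      ∑ i, ∑ j, Bmat A i j * s i * s j ≤ lp * ∑ i, s i ^ 2 := by
    intro s hs
    rw [formB_eq, hlp]
    have := hray s hs
    linarith
  set u : Fin n → ℝ := Bmat A *ᵥ t with hu
  have hu0 : ∑ i, u i = 0 := sum_mulVec_zero A hsym hrow t ht
  set T : ℝ := ∑ i, t i ^ 2 with hT
  set U : ℝ := ∑ i, u i ^ 2 with hU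
  have hT0 : 0 ≤ T := Finset.sum_nonneg fun i _ => sq_nonneg _
  have hU0 : 0 ≤ U := Finset.sum_nonneg fun i _ => sq_nonneg _
  show U ≤ lp^2 * T
  rcases eq_or_lt_of_le hU0 with hUz | hUpos
  · rw [← hUz]; positivity
  rcases eq_or_lt_of_le hT0 with hTz | hTpos
  · -- T = 0 forces t = 0, hence u = 0, contradiction with U > 0
    exfalso
    have htz : ∀ i, t i = 0 := by
      intro i
      have h := Finset.sum_eq_zero_iff_of_nonneg
        (fun i _ => sq_nonneg (t i)) |>.mp hTz.symm i (Finset.mem_univ i)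
      exact (pow_eq_zero_iff two_ne_zero).mp h
    have huz : ∀ i, u i = 0 := by
      intro i
      rw [hu, mulVec_entry]
      exact Finset.sum_eq_zero fun j _ => by rw [htz j, mul_zero]
    have : U = 0 := Finset.sum_eq_zero fun i _ => by rw [huz i]; ring
    rw [this] at hUpos; exact lt_irrefl 0 hUpos
  -- main case
  set a : ℝ := Real.sqrt T with haa
  set b : ℝ := Real.sqrt U with hbb
  have ha0 : 0 < a := Real.sqrt_pos.mpr hTpos
  have hb0 : 0 < b := Real.sqrt_pos.mpr hUpos
  have ha2 : a^2 = T := Real.sq_sqrt hT0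
  have hb2 : b^2 = U := Real.sq_sqrt hU0
  set c : ℝ := a / b with hcc
  have hc0 : 0 < c := div_pos ha0 hb0
  set w : Fin n → ℝ := fun i => t i + c * u i with hw
  set z : Fin n → ℝ := fun i => t i - c * u i with hz
  have hw0 : ∑ i, w i = 0 := by
    simp only [hw]
    rw [Finset.sum_add_distrib, ht, ← Finset.mul_sum, hu0]
    ring
  have key1 : ∑ i, ∑ j, Bmat A i j * w i * w j ≤ lp * ∑ i, w i ^ 2 := formB_le w hw0
  have key2 : 0 ≤ ∑ i, ∑ j, Bmat A i j * z i * z j := formB_nonneg A hsym hnn hrow z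
  -- cross terms
  have hBt : ∀ j, ∑ i, Bmat A i j * t i = u j := by
    intro j
    rw [hu, mulVec_entry]
    exact Finset.sum_congr rfl fun i _ => by rw [Bmat_sym A hsym i j]
  have hcross1 : ∑ i, ∑ j, Bmat A i j * t i * u j = U := by
    rw [Finset.sum_comm]
    calc ∑ j, ∑ i, Bmat A i j * t i * u j
        = ∑ j, (∑ i, Bmat A i j * t i) * u j := by
          exact Finset.sum_congr rfl fun j _ => (Finset.sum_mul _ _ _).symm
      _ = ∑ j, u j * u j := Finset.sum_congr rfl fun j _ => by rw [hBt j]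
      _ = U := by simp only [hU, pow_two]
  have hcross2 : ∑ i, ∑ j, Bmat A i j * u i * t j = U := by
    calc ∑ i, ∑ j, Bmat A i j * u i * t j
        = ∑ i, u i * ∑ j, Bmat A i j * t j := by
          refine Finset.sum_congr rfl fun i _ => ?_
          rw [Finset.mul_sum]
          exact Finset.sum_congr rfl fun j _ => by ring
      _ = ∑ i, u i * u i := by
          refine Finset.sum_congr rfl fun i _ => ?_
          rw [← mulVec_entry, ← hu]
      _ = U := by simp only [hU, pow_two]
  have key3 : (∑ i, ∑ j, Bmat A i j * w i * w j) - (∑ i, ∑ j, Bmat A i j * z i * z j)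
      = 4 * c * U := by
    have hpt : ∀ i j, Bmat A i j * w i * w j - Bmat A i j * z i * z j
        = 2 * c * (Bmat A i j * t i * u j) + 2 * c * (Bmat A i j * u i * t j) := by
      intro i j
      simp only [hw, hz]
      ring
    calc (∑ i, ∑ j, Bmat A i j * w i * w j) - (∑ i, ∑ j, Bmat A i j * z i * z j)
        = ∑ i, ∑ j, (Bmat A i j * w i * w j - Bmat A i j * z i * z j) := by
          rw [← Finset.sum_sub_distrib]
          exact Finset.sum_congr rfl fun i _ => by rw [← Finset.sum_sub_distrib]
      _ = ∑ i, ∑ j, (2 * c * (Bmat A i j * t i * u j) + 2 * c * (Bmat A i j * u i * t j)) := by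
          exact Finset.sum_congr rfl fun i _ => Finset.sum_congr rfl fun j _ => hpt i j
      _ = 2 * c * (∑ i, ∑ j, Bmat A i j * t i * u j)
            + 2 * c * (∑ i, ∑ j, Bmat A i j * u i * t j) := by
          simp only [Finset.mul_sum, ← Finset.sum_add_distrib]
      _ = 4 * c * U := by rw [hcross1, hcross2]; ring
  have key4 : ∑ i, w i ^ 2 = T + 2 * c * (∑ i, t i * u i) + c^2 * U := by
    calc ∑ i, w i ^ 2 = ∑ i, (t i ^ 2 + 2 * c * (t i * u i) + c^2 * u i ^ 2) := by
          exact Finset.sum_congr rfl fun i _ => by simp only [hw]; ring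
      _ = T + 2 * c * (∑ i, t i * u i) + c^2 * U := by
          rw [Finset.sum_add_distrib, Finset.sum_add_distrib, ← Finset.mul_sum,
            ← Finset.mul_sum, hT, hU]
  have key5 : ∑ i, t i * u i ≤ a * b := by
    have := Real.sum_mul_le_sqrt_mul_sqrt Finset.univ t u
    rw [← hT, ← hU, ← haa, ← hbb] at this
    exact this
  -- combine
  have hcU : c * U = a * b := by
    rw [hcc, ← hb2]; field_simp
  have hcab : c * (a * b) = a^2 := by
    rw [hcc]; field_simp
  have hc2U : c^2 * U = a^2 := by
    rw [hcc, ← hb2]; field_simp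
  have hchain : 4 * (a * b) ≤ lp * (4 * a^2) := by
    have h1 : 4 * c * U ≤ lp * ∑ i, w i ^ 2 := by linarith [key1, key2, key3]
    rw [key4] at h1
    have h2 : lp * (T + 2 * c * (∑ i, t i * u i) + c^2 * U)
        ≤ lp * (T + 2 * a^2 + a^2) := by
      apply mul_le_mul_of_nonneg_left _ hlp0
      have h3 : c * (∑ i, t i * u i) ≤ c * (a * b) :=
        mul_le_mul_of_nonneg_left key5 hc0.le
      rw [hcab] at h3
      rw [hc2U]
      linarith
    have h4 : 4 * c * U = 4 * (a * b) := by rw [mul_assoc, hcU]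
    rw [h4] at h1
    calc 4 * (a * b) ≤ lp * (T + 2 * a^2 + a^2) := le_trans h1 h2
      _ = lp * (4 * a^2) := by rw [← ha2]; ring
  have hble : b ≤ lp * a := by
    nlinarith [hchain, ha0, hb0]
  calc U = b^2 := hb2.symm
    _ ≤ (lp * a)^2 := by
        apply pow_le_pow_left₀ hb0.le hble
    _ = lp^2 * T := by rw [mul_pow, ha2]

include hsym hnn hrow in
lemma Bpow_mulVec_sq_le {lam : ℝ} (hlam1 : -1 ≤ lam)
    (hray : ∀ t : Fin n → ℝ, (∑ i, t i) = 0 →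
      ∑ i, ∑ j, A i j * t i * t j ≤ lam * ∑ i, t i ^ 2)
    (m : ℕ) (t : Fin n → ℝ) (ht : ∑ i, t i = 0) :
    ∑ i, (((Bmat A ^ m) *ᵥ t) i)^2 ≤ ((1+lam)/2)^(2*m) * ∑ i, t i ^ 2 := by
  induction m generalizing t with
  | zero =>
    rw [pow_zero, Matrix.one_mulVec]
    simp
  | succ m ih =>
    have hstep := Bmat_mulVec_sq_le A hsym hnn hrow hlam1 hray t ht
    have hmean : ∑ i, (Bmat A *ᵥ t) i = 0 := sum_mulVec_zero A hsym hrow t ht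
    have hih := ih (Bmat A *ᵥ t) hmean
    have hvec : (Bmat A ^ (m+1)) *ᵥ t = (Bmat A ^ m) *ᵥ (Bmat A *ᵥ t) := by
      rw [Matrix.mulVec_mulVec, ← pow_succ]
    rw [hvec]
    have hlp0 : (0:ℝ) ≤ ((1+lam)/2)^(2*m) := by
      apply pow_nonneg; linarith
    calc ∑ i, (((Bmat A ^ m) *ᵥ (Bmat A *ᵥ t)) i)^2
        ≤ ((1+lam)/2)^(2*m) * ∑ i, ((Bmat A *ᵥ t) i)^2 := hih
      _ ≤ ((1+lam)/2)^(2*m) * (((1+lam)/2)^2 * ∑ i, t i ^ 2) :=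
          mul_le_mul_of_nonneg_left hstep hlp0
      _ = ((1+lam)/2)^(2*(m+1)) * ∑ i, t i ^ 2 := by ring

end Spectral


lemma sum_sq_triangle {n : ℕ} (p q r : Fin n → ℝ)
    (_hp : ∀ i, 0 ≤ p i) (_hq : ∀ i, 0 ≤ q i) (hr : ∀ i, 0 ≤ r i)
    (h : ∀ i, r i ≤ p i + q i) :
    ∑ i, r i ^ 2 ≤ (Real.sqrt (∑ i, p i ^ 2) + Real.sqrt (∑ i, q i ^ 2)) ^ 2 := by
  have h1 : ∑ i, r i ^ 2 ≤ ∑ i, (p i + q i) ^ 2 := by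
    refine Finset.sum_le_sum fun i _ => ?_
    exact pow_le_pow_left₀ (hr i) (h i) 2
  have h2 : ∑ i, (p i + q i)^2 = (∑ i, p i ^2) + 2 * (∑ i, p i * q i) + ∑ i, q i ^2 := by
    rw [Finset.mul_sum, ← Finset.sum_add_distrib, ← Finset.sum_add_distrib]
    exact Finset.sum_congr rfl fun i _ => by ring
  have h3 : ∑ i, p i * q i ≤ Real.sqrt (∑ i, p i ^ 2) * Real.sqrt (∑ i, q i ^ 2) :=
    Real.sum_mul_le_sqrt_mul_sqrt _ _ _
  have hsp : Real.sqrt (∑ i, p i ^ 2) ^ 2 = ∑ i, p i ^ 2 :=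
    Real.sq_sqrt (Finset.sum_nonneg fun i _ => sq_nonneg _)
  have hsq : Real.sqrt (∑ i, q i ^ 2) ^ 2 = ∑ i, q i ^ 2 :=
    Real.sq_sqrt (Finset.sum_nonneg fun i _ => sq_nonneg _)
  nlinarith [h1, h2, h3, hsp, hsq]

set_option maxHeartbeats 2000000 in
open scoped Classical in
lemma poincare_sq_bound {n : ℕ} (hn0 : 0 < n) (G : SimpleGraph (Fin n)) (hconn : G.Connected)
    (A : Matrix (Fin n) (Fin n) ℝ)
    (hsym : ∀ i j, A i j = A j i) (hnn : ∀ i j, 0 ≤ A i j)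
    (hrow : ∀ i, ∑ j, A i j = 1)
    (hAsupp : ∀ i j, A i j ≠ 0 → G.Adj i j)
    {lam : ℝ} (hlam1 : -1 ≤ lam)
    (hray : ∀ t : Fin n → ℝ, (∑ i, t i) = 0 →
      ∑ i, ∑ j, A i j * t i * t j ≤ lam * ∑ i, t i ^ 2)
    (X : Type*) [NormedAddCommGroup X] [NormedSpace ℝ X] [FiniteDimensional ℝ X]
    (f : Fin n → X) (D : ℝ) (hD : 0 ≤ D)
    (hf : ∀ i j, ‖f i - f j‖ ≤ D * G.dist i j)
    (m : ℕ)
    (hhalf : (Module.finrank ℝ X : ℝ) * ((1+lam)/2)^m ≤ 1/2) :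
    (∑ i, ∑ j, ‖f i - f j‖)^2 ≤ 16 * (n:ℝ)^4 * (D*(m:ℝ))^2 := by
  set d := Module.finrank ℝ X with hdd
  obtain ⟨c, hc1, hc2⟩ := auerbach_coords X
  set lp : ℝ := (1+lam)/2 with hlp
  have hlp0 : 0 ≤ lp := by rw [hlp]; linarith
  set M : Matrix (Fin n) (Fin n) ℝ := Bmat A ^ m with hM
  have hMnn : ∀ i j, 0 ≤ M i j := Bpow_nn A hnn m
  have hMrow : ∀ i, ∑ j, M i j = 1 := Bpow_row A hrow m
  have hMsupp : ∀ i j, M i j ≠ 0 → G.dist i j ≤ m := Bpow_supp G hconn A hAsupp m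
  set g : Fin n → X := fun i => f i - (n:ℝ)⁻¹ • ∑ l, f l with hg
  have hg_diff : ∀ i j, g i - g j = f i - f j := by
    intro i j
    simp only [hg]
    abel
  have hg_sum : ∑ i, g i = 0 := by
    simp only [hg]
    rw [Finset.sum_sub_distrib, Finset.sum_const, Finset.card_univ, Fintype.card_fin]
    rw [← Nat.cast_smul_eq_nsmul ℝ, smul_smul, mul_inv_cancel₀ (by exact_mod_cast hn0.ne'), one_smul,
      sub_self]
  set Mg : Fin n → X := fun i => ∑ j, M i j • g j with hMg
  set S2 := ∑ i, ‖g i‖^2 with hS2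
  set T1 := ∑ i, ‖g i - Mg i‖^2 with hT1
  set T2 := ∑ i, ‖Mg i‖^2 with hT2
  set sig2 := ∑ i, ∑ j, M i j * ‖g i - g j‖^2 with hsig2
  have hS2_0 : 0 ≤ S2 := Finset.sum_nonneg fun i _ => sq_nonneg _
  have hsig2_0 : 0 ≤ sig2 := Finset.sum_nonneg fun i _ =>
    Finset.sum_nonneg fun j _ => mul_nonneg (hMnn i j) (sq_nonneg _)
  -- Step 1
  have step1 : T1 ≤ sig2 := by
    rw [hT1, hsig2]
    refine Finset.sum_le_sum fun i _ => ?_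
    have hrep : g i - Mg i = ∑ j, M i j • (g i - g j) := by
      have he : ∑ j, M i j • (g i - g j) = (∑ j, M i j) • g i - ∑ j, M i j • g j := by
        calc ∑ j, M i j • (g i - g j) = ∑ j, (M i j • g i - M i j • g j) :=
              Finset.sum_congr rfl fun j _ => smul_sub _ _ _
          _ = (∑ j, M i j • g i) - ∑ j, M i j • g j := Finset.sum_sub_distrib _ _
          _ = (∑ j, M i j) • g i - ∑ j, M i j • g j := by rw [Finset.sum_smul]
      rw [he, hMrow i, one_smul]
    have hnorm : ‖g i - Mg i‖ ≤ ∑ j, M i j * ‖g i - g j‖ := by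
      rw [hrep]
      refine le_trans (norm_sum_le _ _) ?_
      refine le_of_eq (Finset.sum_congr rfl fun j _ => ?_)
      rw [norm_smul, Real.norm_eq_abs, abs_of_nonneg (hMnn i j)]
    have hCS : (∑ j, M i j * ‖g i - g j‖)^2 ≤ ∑ j, M i j * ‖g i - g j‖^2 := by
      have h := Finset.sum_sq_le_sum_mul_sum_of_sq_eq_mul Finset.univ
        (f := fun j => M i j) (g := fun j => M i j * ‖g i - g j‖^2)
        (r := fun j => M i j * ‖g i - g j‖)
        (fun j _ => hMnn i j) (fun j _ => mul_nonneg (hMnn i j) (sq_nonneg _))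
        (fun j _ => by ring)
      rw [hMrow i, one_mul] at h
      exact h
    calc ‖g i - Mg i‖^2 ≤ (∑ j, M i j * ‖g i - g j‖)^2 :=
          pow_le_pow_left₀ (norm_nonneg _) hnorm 2
      _ ≤ ∑ j, M i j * ‖g i - g j‖^2 := hCS
  -- Step 2
  have step2 : T2 ≤ ((d:ℝ) * lp^m)^2 * S2 := by
    have hsum_cg : ∀ e : Fin d, ∑ i, c (g i) e = 0 := by
      intro e
      have h0 : (∑ i, c (g i)) = 0 := by rw [← map_sum, hg_sum, map_zero]
      calc ∑ i, c (g i) e = (∑ i, c (g i)) e := by rw [Finset.sum_apply]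
        _ = 0 := by rw [h0]; rfl
    have hMgc : ∀ i : Fin n, c (Mg i) = ∑ j, M i j • c (g j) := by
      intro i
      show c (∑ j, M i j • g j) = _
      rw [map_sum]
      exact Finset.sum_congr rfl fun j _ => map_smul c _ _
    have hMve : ∀ (i : Fin n) (e : Fin d), c (Mg i) e = (M *ᵥ (fun i' => c (g i') e)) i := by
      intro i e
      rw [mulVec_entry, hMgc i, Finset.sum_apply]
      exact Finset.sum_congr rfl fun j _ => by rw [Pi.smul_apply, smul_eq_mul]
    have hcoord : ∀ e : Fin d, ∑ i, (c (Mg i) e)^2 ≤ lp^(2*m) * ∑ i, (c (g i) e)^2 := by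
      intro e
      have hb := Bpow_mulVec_sq_le A hsym hnn hrow hlam1 hray m
        (fun i' => c (g i') e) (hsum_cg e)
      calc ∑ i, (c (Mg i) e)^2 = ∑ i, ((M *ᵥ (fun i' => c (g i') e)) i)^2 :=
            Finset.sum_congr rfl fun i _ => by rw [hMve i e]
        _ ≤ lp^(2*m) * ∑ i, (c (g i) e)^2 := hb
    have hpow2 : lp^(2*m) = ((lp:ℝ)^m)^2 := by
      rw [← pow_mul, mul_comm]
    calc T2 ≤ ∑ i, ((d:ℝ) * ∑ e, (c (Mg i) e)^2) :=
          Finset.sum_le_sum fun i _ => hc1 (Mg i)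
      _ = (d:ℝ) * ∑ e, ∑ i, (c (Mg i) e)^2 := by
          rw [← Finset.mul_sum, Finset.sum_comm]
      _ ≤ (d:ℝ) * ∑ e, (lp^(2*m) * ∑ i, (c (g i) e)^2) := by
          exact mul_le_mul_of_nonneg_left (Finset.sum_le_sum fun e _ => hcoord e)
            (Nat.cast_nonneg d)
      _ = (d:ℝ) * lp^(2*m) * ∑ i, ∑ e, (c (g i) e)^2 := by
          rw [← Finset.mul_sum, Finset.sum_comm, mul_assoc]
      _ ≤ (d:ℝ) * lp^(2*m) * ∑ i, ((d:ℝ) * ‖g i‖^2) := by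
          refine mul_le_mul_of_nonneg_left (Finset.sum_le_sum fun i _ => hc2 (g i)) ?_
          positivity
      _ = ((d:ℝ) * lp^m)^2 * S2 := by
          rw [hS2, ← Finset.mul_sum, hpow2]
          ring
  -- Step 3
  have hdlp : 0 ≤ (d:ℝ) * lp^m := by positivity
  have step3 : S2 ≤ 4 * sig2 := by
    have htri := sum_sq_triangle (fun i => ‖g i - Mg i‖) (fun i => ‖Mg i‖) (fun i => ‖g i‖)
      (fun i => norm_nonneg _) (fun i => norm_nonneg _) (fun i => norm_nonneg _)
      (fun i => by
        calc ‖g i‖ = ‖(g i - Mg i) + Mg i‖ := by rw [sub_add_cancel]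
          _ ≤ ‖g i - Mg i‖ + ‖Mg i‖ := norm_add_le _ _)
    have hT2' : T2 ≤ (1/4) * S2 := by
      have h1 : ((d:ℝ) * lp^m)^2 ≤ (1/2)^2 := pow_le_pow_left₀ hdlp hhalf 2
      nlinarith [step2, hS2_0]
    have hsT1 : Real.sqrt T1 ≤ Real.sqrt sig2 := Real.sqrt_le_sqrt step1
    have hsT2 : Real.sqrt T2 ≤ (1/2) * Real.sqrt S2 := by
      calc Real.sqrt T2 ≤ Real.sqrt ((1/4) * S2) := Real.sqrt_le_sqrt hT2'
        _ = (1/2) * Real.sqrt S2 := by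
            rw [show (1/4 : ℝ) * S2 = ((1/2):ℝ)^2 * S2 by norm_num,
              Real.sqrt_mul (by positivity) S2, Real.sqrt_sq (by norm_num : (0:ℝ) ≤ 1/2)]
    have hsS : Real.sqrt S2 ^ 2 = S2 := Real.sq_sqrt hS2_0
    have hss : Real.sqrt sig2 ^2 = sig2 := Real.sq_sqrt hsig2_0
    have hmono : (Real.sqrt T1 + Real.sqrt T2)^2
        ≤ (Real.sqrt sig2 + (1/2)*Real.sqrt S2)^2 := by
      apply pow_le_pow_left₀ (by positivity) (by linarith) 2
    nlinarith [htri, hmono, hsS, hss, Real.sqrt_nonneg S2, Real.sqrt_nonneg sig2,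
      sq_nonneg (Real.sqrt S2 - 2*Real.sqrt sig2)]
  -- Step 5
  have step5 : sig2 ≤ (D*(m:ℝ))^2 * n := by
    have hterm : ∀ i j, M i j * ‖g i - g j‖^2 ≤ M i j * (D*(m:ℝ))^2 := by
      intro i j
      rcases eq_or_ne (M i j) 0 with h0 | h0
      · rw [h0, zero_mul, zero_mul]
      · have hdm : G.dist i j ≤ m := hMsupp i j h0
        have hfb : ‖f i - f j‖ ≤ D * (m:ℝ) := by
          calc ‖f i - f j‖ ≤ D * G.dist i j := hf i j
            _ ≤ D * m := by
                apply mul_le_mul_of_nonneg_left _ hD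
                exact_mod_cast hdm
        have hsq : ‖g i - g j‖^2 ≤ (D*(m:ℝ))^2 := by
          rw [hg_diff i j]
          exact pow_le_pow_left₀ (norm_nonneg _) hfb 2
        exact mul_le_mul_of_nonneg_left hsq (hMnn i j)
    calc sig2 ≤ ∑ i, ∑ j, M i j * (D*(m:ℝ))^2 :=
          Finset.sum_le_sum fun i _ => Finset.sum_le_sum fun j _ => hterm i j
      _ = ∑ _i : Fin n, (D*(m:ℝ))^2 := by
          refine Finset.sum_congr rfl fun i _ => ?_
          rw [← Finset.sum_mul, hMrow i, one_mul]
      _ = (D*(m:ℝ))^2 * n := by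
          rw [Finset.sum_const, nsmul_eq_mul, Finset.card_univ, Fintype.card_fin]
          ring
  -- Step 4
  have step4 : ∑ i, ∑ j, ‖f i - f j‖^2 ≤ 4 * (n:ℝ) * S2 := by
    have hpt : ∀ i j : Fin n, ‖f i - f j‖^2 ≤ 2*‖g i‖^2 + 2*‖g j‖^2 := by
      intro i j
      have h1 : ‖f i - f j‖ ≤ ‖g i‖ + ‖g j‖ := by
        rw [← hg_diff i j]; exact norm_sub_le _ _
      nlinarith [norm_nonneg (g i), norm_nonneg (g j), sq_nonneg (‖g i‖ - ‖g j‖),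
        pow_le_pow_left₀ (norm_nonneg (f i - f j)) h1 2]
    calc ∑ i, ∑ j, ‖f i - f j‖^2 ≤ ∑ i, ∑ j, (2*‖g i‖^2 + 2*‖g j‖^2) :=
          Finset.sum_le_sum fun i _ => Finset.sum_le_sum fun j _ => hpt i j
      _ = ∑ i, ((n:ℝ) * (2*‖g i‖^2) + 2 * S2) := by
          refine Finset.sum_congr rfl fun i _ => ?_
          rw [Finset.sum_add_distrib, Finset.sum_const, nsmul_eq_mul, Finset.card_univ,
            Fintype.card_fin, ← Finset.mul_sum, hS2]
      _ = (n:ℝ) * 2 * S2 + (n:ℝ) * (2 * S2) := by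
          rw [Finset.sum_add_distrib, Finset.sum_const, nsmul_eq_mul, Finset.card_univ,
            Fintype.card_fin, ← Finset.mul_sum, ← Finset.mul_sum, hS2]
          ring
      _ = 4 * (n:ℝ) * S2 := by ring
  -- Step 6
  have hcs1 : ∀ (y : Fin n → ℝ), (∑ i, y i)^2 ≤ (n:ℝ) * ∑ i, (y i)^2 := by
    intro y
    have h := Finset.sum_mul_sq_le_sq_mul_sq Finset.univ (fun _ => (1:ℝ)) y
    simpa [Finset.card_univ] using h
  have step6 : (∑ i, ∑ j, ‖f i - f j‖)^2 ≤ (n:ℝ)^2 * ∑ i, ∑ j, ‖f i - f j‖^2 := by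
    calc (∑ i, ∑ j, ‖f i - f j‖)^2 ≤ (n:ℝ) * ∑ i, (∑ j, ‖f i - f j‖)^2 := hcs1 _
      _ ≤ (n:ℝ) * ∑ i, ((n:ℝ) * ∑ j, ‖f i - f j‖^2) := by
          exact mul_le_mul_of_nonneg_left (Finset.sum_le_sum fun i _ => hcs1 _)
            (Nat.cast_nonneg n)
      _ = (n:ℝ)^2 * ∑ i, ∑ j, ‖f i - f j‖^2 := by
          rw [← Finset.mul_sum]; ring
  calc (∑ i, ∑ j, ‖f i - f j‖)^2 ≤ (n:ℝ)^2 * ∑ i, ∑ j, ‖f i - f j‖^2 := step6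
    _ ≤ (n:ℝ)^2 * (4 * (n:ℝ) * S2) := mul_le_mul_of_nonneg_left step4 (by positivity)
    _ ≤ (n:ℝ)^2 * (4 * (n:ℝ) * (4 * sig2)) := by
        have : 4 * (n:ℝ) * S2 ≤ 4 * (n:ℝ) * (4 * sig2) := by
          apply mul_le_mul_of_nonneg_left step3 (by positivity)
        exact mul_le_mul_of_nonneg_left this (by positivity)
    _ ≤ (n:ℝ)^2 * (4 * (n:ℝ) * (4 * ((D*(m:ℝ))^2 * n))) := by
        have : 4 * sig2 ≤ 4 * ((D*(m:ℝ))^2 * n) := by linarith [step5]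
        have h2 : 4 * (n:ℝ) * (4 * sig2) ≤ 4 * (n:ℝ) * (4 * ((D*(m:ℝ))^2 * n)) := by
          apply mul_le_mul_of_nonneg_left this (by positivity)
        exact mul_le_mul_of_nonneg_left h2 (by positivity)
    _ = 16 * (n:ℝ)^4 * (D*(m:ℝ))^2 := by ring

end ExpanderAux


open ExpanderAux

set_option maxHeartbeats 1000000

open scoped Classical in
/-- An expander embedding with average distortion `D` into a normed
space `X` forces `dim X ≥ κ · n^{ρ(1-λ₂(G))/(D log k)}` (Corollary 1.2). -/
theorem expander_average_distortion_dimension_lower_bound :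
    ∃ ρ : ℝ, 0 < ρ ∧ ∃ κ : ℝ, 0 < κ ∧
      ∀ (n k : ℕ), 3 ≤ k → k ≤ n →
      ∀ G : SimpleGraph (Fin n), G.Connected → G.IsRegularOfDegree k →
      ∀ lam : ℝ,
        IsGreatest {r : ℝ | ∃ t : Fin n → ℝ, t ≠ 0 ∧ (∑ i, t i) = 0 ∧
            r = (∑ i, ∑ j, (if G.Adj i j then (1 : ℝ) / k else 0) * t i * t j) /
              (∑ i, (t i) ^ 2)} lam →
      ∀ D : ℝ, 1 ≤ D →
      ∀ (X : Type*) [NormedAddCommGroup X] [NormedSpace ℝ X] [FiniteDimensional ℝ X],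
        (∃ f : Fin n → X,
          (∀ i j, ‖f i - f j‖ ≤ D * G.dist i j) ∧
          (∑ i, ∑ j, (G.dist i j : ℝ)) ≤ ∑ i, ∑ j, ‖f i - f j‖) →
        κ * (n : ℝ) ^ (ρ * (1 - lam) / (D * Real.log k)) ≤ Module.finrank ℝ X := by
  refine ⟨1/288, by norm_num, 1/2, by norm_num, ?_⟩
  intro n k hk3 hkn G hconn hreg lam hlam D hD X _ _ _ hemb
  obtain ⟨f, hf, hflow⟩ := hemb
  have hn3 : 3 ≤ n := le_trans hk3 hkn
  have hn0 : 0 < n := by omega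
  have hk0 : (0:ℝ) < (k:ℝ) := by exact_mod_cast (by omega : 0 < k)
  set A : Matrix (Fin n) (Fin n) ℝ :=
    Matrix.of (fun i j => if G.Adj i j then (1:ℝ)/k else 0) with hA
  have hAapp : ∀ i j, A i j = if G.Adj i j then (1:ℝ)/k else 0 := fun i j => rfl
  have hsym : ∀ i j, A i j = A j i := by
    intro i j
    rw [hAapp, hAapp]
    by_cases h : G.Adj i j
    · simp [h, h.symm]
    · have h' : ¬ G.Adj j i := fun hh => h hh.symm
      simp [h, h']
  have hnn : ∀ i j, 0 ≤ A i j := by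
    intro i j
    rw [hAapp]
    by_cases h : G.Adj i j <;> simp [h] <;> positivity
  have hrow : ∀ i, ∑ j, A i j = 1 := by
    intro i
    have h1 : ∑ j, A i j = ∑ j ∈ Finset.univ.filter (fun j => G.Adj i j), (1:ℝ)/k := by
      rw [Finset.sum_filter]
      exact Finset.sum_congr rfl fun a _ => hAapp i a
    have h2 : Finset.univ.filter (fun j => G.Adj i j) = G.neighborFinset i := by
      ext j
      simp [SimpleGraph.mem_neighborFinset]
    rw [h1, h2, Finset.sum_const, SimpleGraph.card_neighborFinset_eq_degree, hreg i,
      nsmul_eq_mul]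
    field_simp
  have hAsupp : ∀ i j, A i j ≠ 0 → G.Adj i j := by
    intro i j h
    by_contra hc
    apply h
    rw [hAapp]
    simp [hc]
  obtain ⟨hmem, hub⟩ := hlam
  have hsumpos : ∀ t : Fin n → ℝ, t ≠ 0 → 0 < ∑ i, t i ^ 2 := by
    intro t ht
    obtain ⟨i, hi⟩ := Function.ne_iff.mp ht
    have hpos : 0 < t i ^ 2 := by
      have h2 : t i ^ 2 ≠ 0 := pow_ne_zero 2 hi
      exact lt_of_le_of_ne (sq_nonneg _) (Ne.symm h2)
    exact Finset.sum_pos' (fun j _ => sq_nonneg _) ⟨i, Finset.mem_univ i, hpos⟩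
  have hray : ∀ t : Fin n → ℝ, (∑ i, t i) = 0 →
      ∑ i, ∑ j, A i j * t i * t j ≤ lam * ∑ i, t i ^ 2 := by
    intro t ht
    rcases eq_or_ne t 0 with rfl | htne
    · simp
    · have hmemt : (∑ i, ∑ j, (if G.Adj i j then (1 : ℝ) / k else 0) * t i * t j) /
          (∑ i, (t i) ^ 2) ∈ {r : ℝ | ∃ t : Fin n → ℝ, t ≠ 0 ∧ (∑ i, t i) = 0 ∧
            r = (∑ i, ∑ j, (if G.Adj i j then (1 : ℝ) / k else 0) * t i * t j) /
              (∑ i, (t i) ^ 2)} := ⟨t, htne, ht, rfl⟩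
      have hle := hub hmemt
      have hp := hsumpos t htne
      rw [div_le_iff₀ hp] at hle
      exact hle
  have hlamge : -1 ≤ lam := by
    obtain ⟨t0, ht0ne, ht0sum, heq⟩ := hmem
    have hp := hsumpos t0 ht0ne
    have hfg := form_ge_neg A hsym hnn hrow t0
    rw [heq, le_div_iff₀ hp]
    calc (-1) * ∑ i, t0 i ^ 2 = -(∑ i, t0 i ^2) := by ring
      _ ≤ ∑ i, ∑ j, A i j * t0 i * t0 j := hfg
      _ = ∑ i, ∑ j, (if G.Adj i j then (1 : ℝ) / k else 0) * t0 i * t0 j := rfl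
  set d := Module.finrank ℝ X with hdd
  have hd1 : 1 ≤ d := by
    rcases Nat.eq_zero_or_pos d with h0 | h
    swap
    · exact h
    exfalso
    have hsub : Subsingleton X := by
      rw [hdd] at h0
      exact Module.finrank_zero_iff.mp h0
    have hfz : ∀ i j : Fin n, ‖f i - f j‖ = (0:ℝ) := fun i j => by
      have : f i - f j = 0 := Subsingleton.elim _ _
      rw [this, norm_zero]
    have hsum0 : ∑ i, ∑ j, ‖f i - f j‖ = 0 :=
      Finset.sum_eq_zero fun i _ => Finset.sum_eq_zero fun j _ => hfz i j
    set i0 : Fin n := ⟨0, by omega⟩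
    set i1 : Fin n := ⟨1, by omega⟩
    have hne : i0 ≠ i1 := by
      intro h
      have := congrArg Fin.val h
      simp [i0, i1] at this
    have hdp : 0 < G.dist i0 i1 := hconn.pos_dist_of_ne hne
    have hpos : 0 < ∑ i, ∑ j, (G.dist i j : ℝ) := by
      refine Finset.sum_pos' (fun i _ => Finset.sum_nonneg fun j _ => by positivity)
        ⟨i0, Finset.mem_univ i0, ?_⟩
      refine Finset.sum_pos' (fun j _ => by positivity) ⟨i1, Finset.mem_univ i1, ?_⟩
      exact_mod_cast hdp
    linarith [hflow, hsum0, hpos]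
  have hD0 : (0:ℝ) < D := lt_of_lt_of_le one_pos hD
  have hlogk : 0 < Real.log k := Real.log_pos (by exact_mod_cast (by omega : 1 < k))
  have hdpos : (1:ℝ) ≤ (d:ℝ) := by exact_mod_cast hd1
  by_cases hlam_lt : lam < 1
  swap
  · push_neg at hlam_lt
    have hE : 1/288 * (1 - lam) / (D * Real.log k) ≤ 0 := by
      apply div_nonpos_of_nonpos_of_nonneg
      · nlinarith
      · positivity
    have hrpow : (n:ℝ) ^ (1/288 * (1 - lam) / (D * Real.log k)) ≤ 1 :=
      Real.rpow_le_one_of_one_le_of_nonpos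
        (by exact_mod_cast (by omega : 1 ≤ n)) hE
    calc (1/2 : ℝ) * (n:ℝ) ^ (1/288 * (1 - lam) / (D * Real.log k)) ≤ (1/2) * 1 := by
          exact mul_le_mul_of_nonneg_left hrpow (by norm_num)
      _ ≤ (d:ℝ) := by linarith
  -- main case
  set lp : ℝ := (1+lam)/2 with hlp
  have hgap : 0 < 1 - lp := by rw [hlp]; linarith
  have hlp0 : 0 ≤ lp := by rw [hlp]; linarith
  have hlog2d : 0 < Real.log (2*(d:ℝ)) := Real.log_pos (by linarith)
  set x : ℝ := Real.log (2*(d:ℝ)) / (1 - lp) with hx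
  have hx0 : 0 < x := div_pos hlog2d hgap
  set m : ℕ := ⌈x⌉₊ with hm
  have hm_ge : x ≤ (m:ℝ) := Nat.le_ceil x
  have hm_le : (m:ℝ) ≤ 3 * x := by
    have h1 : (m:ℝ) < x + 1 := Nat.ceil_lt_add_one hx0.le
    have hgap1 : 1 - lp ≤ 1 := by linarith
    have hxlog2 : Real.log 2 ≤ x := by
      have h2 : Real.log 2 ≤ Real.log (2*(d:ℝ)) := by
        apply Real.log_le_log (by norm_num)
        nlinarith
      rw [hx, le_div_iff₀ hgap]
      nlinarith [Real.log_nonneg (by norm_num : (1:ℝ) ≤ 2)]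
    have hlog2 : (0.6931471803 : ℝ) < Real.log 2 := Real.log_two_gt_d9
    linarith
  have hhalf : (d:ℝ) * lp^m ≤ 1/2 := by
    have h1 : lp ≤ Real.exp (lp - 1) := by
      have := Real.add_one_le_exp (lp - 1); linarith
    have h2 : lp^m ≤ Real.exp (lp-1)^m := pow_le_pow_left₀ hlp0 h1 m
    have h3 : Real.exp (lp-1)^m = Real.exp ((m:ℝ)*(lp-1)) := (Real.exp_nat_mul _ m).symm
    have h5 : Real.log (2*(d:ℝ)) ≤ (m:ℝ) * (1 - lp) := by
      rw [hx] at hm_ge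
      exact (div_le_iff₀ hgap).mp hm_ge
    have h4 : (m:ℝ)*(lp-1) ≤ -Real.log (2*(d:ℝ)) := by nlinarith
    have h6 : Real.exp ((m:ℝ)*(lp-1)) ≤ Real.exp (-Real.log (2*(d:ℝ))) :=
      Real.exp_le_exp.mpr h4
    have h7 : Real.exp (-Real.log (2*(d:ℝ))) = (2*(d:ℝ))⁻¹ := by
      rw [Real.exp_neg, Real.exp_log (by positivity)]
    have h8 : lp^m ≤ (2*(d:ℝ))⁻¹ := by
      rw [← h7]
      calc lp^m ≤ Real.exp (lp-1)^m := h2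
        _ = Real.exp ((m:ℝ)*(lp-1)) := h3
        _ ≤ _ := h6
    calc (d:ℝ)*lp^m ≤ (d:ℝ) * (2*(d:ℝ))⁻¹ := by
          exact mul_le_mul_of_nonneg_left h8 (by positivity)
      _ = 1/2 := by field_simp
  have hchain := poincare_sq_bound hn0 G hconn A hsym hnn hrow hAsupp hlamge hray X f D
    (by linarith) hf m hhalf
  have hlow := dist_sum_lower hk3 hn3 G hconn hreg
  set Sd := ∑ i, ∑ j, (G.dist i j : ℝ) with hSd
  have hSd0 : 0 ≤ Sd := Finset.sum_nonneg fun i _ => Finset.sum_nonneg fun j _ => by positivity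
  have hSd2 : Sd^2 ≤ (4*(n:ℝ)^2*(D*(m:ℝ)))^2 := by
    have hfb0 : (0:ℝ) ≤ ∑ i, ∑ j, ‖f i - f j‖ :=
      Finset.sum_nonneg fun i _ => Finset.sum_nonneg fun j _ => norm_nonneg _
    calc Sd^2 ≤ (∑ i, ∑ j, ‖f i - f j‖)^2 := pow_le_pow_left₀ hSd0 hflow 2
      _ ≤ 16*(n:ℝ)^4*(D*(m:ℝ))^2 := hchain
      _ = (4*(n:ℝ)^2*(D*(m:ℝ)))^2 := by ring
  have hSdle2 : Sd ≤ 4*(n:ℝ)^2*(D*(m:ℝ)) := by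
    have h := Real.sqrt_le_sqrt hSd2
    rwa [Real.sqrt_sq hSd0, Real.sqrt_sq (by positivity)] at h
  set v : ℝ := Real.log ((n:ℝ)/2) / (2*Real.log k) with hv
  have hineq1 : ((n:ℝ)^2/2) * v ≤ 4*(n:ℝ)^2*(D*(m:ℝ)) := le_trans hlow hSdle2
  have hn2 : (0:ℝ) < (n:ℝ)^2 := by positivity
  have hvm : v ≤ 8*D*(m:ℝ) := by nlinarith [hineq1]
  have hlogn : 0 < Real.log n := Real.log_pos (by exact_mod_cast (by omega : 1 < n))
  have hvge : Real.log (n:ℝ) / (6 * Real.log k) ≤ v := by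
    have hn3' : (3:ℝ) ≤ (n:ℝ) := by exact_mod_cast hn3
    have h8 : Real.log 8 ≤ Real.log ((n:ℝ)^2) := by
      apply Real.log_le_log (by norm_num)
      nlinarith
    rw [Real.log_pow] at h8
    have h83 : Real.log 8 = 3 * Real.log 2 := by
      rw [show (8:ℝ) = 2^3 by norm_num, Real.log_pow]
      push_cast
      ring
    have hl2 : Real.log ((n:ℝ)/2) = Real.log n - Real.log 2 :=
      Real.log_div (by positivity) (by norm_num)
    rw [hv, hl2, div_le_div_iff₀ (by positivity) (by positivity)]
    rw [h83] at h8
    push_cast at h8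
    nlinarith [hlogk, hlogn, Real.log_nonneg (by norm_num : (1:ℝ) ≤ 2)]
  have hfinal1 : Real.log (n:ℝ)/(6*Real.log k) ≤ 24 * D * x := by
    calc Real.log (n:ℝ)/(6*Real.log k) ≤ v := hvge
      _ ≤ 8*D*(m:ℝ) := hvm
      _ ≤ 8*D*(3*x) := by nlinarith [hm_le, hD0]
      _ = 24*D*x := by ring
  have h1lam : 0 < 1 - lam := by linarith
  have hgap2 : 1 - lp = (1-lam)/2 := by rw [hlp]; ring
  have hkey : 1/288 * (1-lam) / (D * Real.log k) * Real.log n ≤ Real.log (2*(d:ℝ)) := by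
    have hxval : x = Real.log (2*(d:ℝ)) / ((1-lam)/2) := by rw [hx, hgap2]
    rw [hxval] at hfinal1
    rw [div_le_iff₀ (by positivity : (0:ℝ) < 6*Real.log k)] at hfinal1
    have hexp : 24 * D * (Real.log (2*(d:ℝ)) / ((1-lam)/2)) * (6*Real.log k)
        = 288 * D * Real.log k * Real.log (2*(d:ℝ)) / (1-lam) := by
      field_simp
      ring
    rw [hexp] at hfinal1
    rw [le_div_iff₀ h1lam] at hfinal1
    rw [div_mul_eq_mul_div, div_le_iff₀ (by positivity : (0:ℝ) < D * Real.log k)]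
    linarith [hfinal1]
  have hE : (n:ℝ) ^ (1/288 * (1-lam) / (D*Real.log k)) ≤ 2*(d:ℝ) := by
    rw [Real.rpow_def_of_pos (by exact_mod_cast hn0 : (0:ℝ) < (n:ℝ)), mul_comm (Real.log (n:ℝ))]
    calc Real.exp (1/288 * (1-lam) / (D*Real.log k) * Real.log n)
        ≤ Real.exp (Real.log (2*(d:ℝ))) := Real.exp_le_exp.mpr hkey
      _ = 2*(d:ℝ) := Real.exp_log (by positivity)
  calc (1/2 : ℝ) * (n:ℝ) ^ (1/288*(1-lam)/(D*Real.log k)) ≤ (1/2) * (2*(d:ℝ)) := by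
        exact mul_le_mul_of_nonneg_left hE (by norm_num)
    _ = (d:ℝ) := by ring
end

section
/- Let G = ([n], E_G) be a connected vertex-transitive graph and let diam(G) denote the diameter of the metric space ([n], d_G). Then n²·diam(G) ≥ ∑_{i=1}^n ∑_{j=1}^n d_G(i,j) ≥ n²·diam(G)/4. -/
open Finset

lemma iso_dist_le {n : ℕ} (G : SimpleGraph (Fin n)) (φ : G ≃g G)
    (hconn : G.Connected) (u v : Fin n) : G.dist (φ u) (φ v) ≤ G.dist u v := by
  obtain ⟨p, hp⟩ := (hconn u v).exists_walk_length_eq_dist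
  calc G.dist (φ u) (φ v) ≤ (p.map φ.toHom).length := G.dist_le _
    _ = p.length := p.length_map _
    _ = G.dist u v := hp

lemma iso_dist {n : ℕ} (G : SimpleGraph (Fin n)) (φ : G ≃g G)
    (hconn : G.Connected) (u v : Fin n) : G.dist (φ u) (φ v) = G.dist u v := by
  refine le_antisymm (iso_dist_le G φ hconn u v) ?_
  have := iso_dist_le G φ.symm hconn (φ u) (φ v)
  simpa using this

/-- For a connected vertex-transitive graph,
`n²·diam(G) ≥ ∑_{i,j} d_G(i,j) ≥ n²·diam(G)/4`. -/
theorem vertex_transitive_sum_distances_diam (n : ℕ) (G : SimpleGraph (Fin n))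
    (hconn : G.Connected) (htrans : ∀ u v : Fin n, ∃ φ : G ≃g G, φ u = v) :
    (∑ i, ∑ j, (G.dist i j : ℝ)) ≤ (n : ℝ) ^ 2 * (G.diam : ℝ) ∧
    (n : ℝ) ^ 2 * (G.diam : ℝ) / 4 ≤ ∑ i, ∑ j, (G.dist i j : ℝ) := by
  rcases Nat.eq_zero_or_pos n with rfl | hn
  · simp
  have : Nonempty (Fin n) := ⟨⟨0, hn⟩⟩
  have hetop : G.ediam ≠ ⊤ := by
    obtain ⟨u, v, huv⟩ := G.exists_edist_eq_ediam_of_finite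
    rw [← huv]
    exact SimpleGraph.edist_ne_top_iff_reachable.mpr (hconn u v)
  -- row sums are all equal
  have hrow : ∀ i i' : Fin n, ∑ j, G.dist i j = ∑ j, G.dist i' j := by
    intro i i'
    obtain ⟨φ, hφ⟩ := htrans i i'
    calc ∑ j, G.dist i j = ∑ j, G.dist (φ i) (φ j) := by
          simp [iso_dist G φ hconn]
      _ = ∑ j, G.dist i' j := by
          rw [hφ]
          exact Fintype.sum_equiv φ.toEquiv _ _ (fun j => rfl)
  -- upper bound
  have hub : ∀ i j : Fin n, G.dist i j ≤ G.diam := fun i j =>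
    SimpleGraph.dist_le_diam hetop
  constructor
  · have h1 : ∑ i, ∑ j, (G.dist i j : ℝ) ≤ ∑ _i : Fin n, ∑ _j : Fin n, (G.diam : ℝ) := by
      apply Finset.sum_le_sum; intro i _
      apply Finset.sum_le_sum; intro j _
      exact_mod_cast hub i j
    have h2 : ∑ _i : Fin n, ∑ _j : Fin n, (G.diam : ℝ) = (n : ℝ) ^ 2 * (G.diam : ℝ) := by
      simp [Finset.sum_const]; ring
    linarith
  · -- lower bound
    obtain ⟨u, v, huv⟩ := SimpleGraph.exists_dist_eq_diam (G := G)
    have key : n * G.diam ≤ 2 * ∑ j, G.dist u j := by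
      have h1 : ∀ w : Fin n, G.diam ≤ G.dist u w + G.dist w v := fun w =>
        huv ▸ hconn.dist_triangle
      calc n * G.diam = ∑ _w : Fin n, G.diam := by simp [mul_comm]
        _ ≤ ∑ w, (G.dist u w + G.dist w v) := Finset.sum_le_sum (fun w _ => h1 w)
        _ = ∑ w, G.dist u w + ∑ w, G.dist w v := Finset.sum_add_distrib
        _ = ∑ w, G.dist u w + ∑ w, G.dist v w := by
            congr 1; exact Finset.sum_congr rfl (fun w _ => G.dist_comm ..)
        _ = ∑ w, G.dist u w + ∑ w, G.dist u w := by rw [hrow v u]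
        _ = 2 * ∑ j, G.dist u j := by ring
    have htot : ∑ i, ∑ j, G.dist i j = n * ∑ j, G.dist u j := by
      calc ∑ i, ∑ j, G.dist i j = ∑ _i : Fin n, ∑ j, G.dist u j :=
            Finset.sum_congr rfl (fun i _ => hrow i u)
        _ = n * ∑ j, G.dist u j := by simp [mul_comm]
    have keyN : n ^ 2 * G.diam ≤ 2 * ∑ i, ∑ j, G.dist i j := by
      rw [htot]
      calc n ^ 2 * G.diam = n * (n * G.diam) := by ring
        _ ≤ n * (2 * ∑ j, G.dist u j) := Nat.mul_le_mul_left _ key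
        _ = 2 * (n * ∑ j, G.dist u j) := by ring
    have : (n : ℝ) ^ 2 * (G.diam : ℝ) ≤ 2 * ∑ i, ∑ j, (G.dist i j : ℝ) := by
      have := keyN
      push_cast at *
      exact_mod_cast this
    have hnn : (0:ℝ) ≤ (n : ℝ) ^ 2 * (G.diam : ℝ) := by positivity
    linarith
end
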